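/- For independent standard Gaussian random variables a1, a2 and any angle θ, E[|a1 (a1 cos θ + a2 sin θ)|] = (2/π)(|sin θ| + arcsin(cos θ) cos θ). -/

import Mathlib

open MeasureTheory ProbabilityTheory

open Real Set Filter in
private lemma keyK (θ : ℝ) : (∫ u in (-π)..π, |Real.cos u + Real.cos θ|) =
    4 * |Real.sin θ| + 4 * Real.cos θ * Real.arcsin (Real.cos θ) := by
  set c := Real.cos θ with hc
  set α := π - Real.arccos c with hα
  have hc1 : -1 ≤ c := Real.neg_one_le_cos θ
  have hc2 : c ≤ 1 := Real.cos_le_one θ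
  have hα0 : 0 ≤ α := by have := Real.arccos_le_pi c; rw [hα]; linarith
  have hαπ : α ≤ π := by have := Real.arccos_nonneg c; rw [hα]; linarith
  have hcosα : Real.cos α = -c := by rw [hα, Real.cos_pi_sub, Real.cos_arccos hc1 hc2]
  have hsinα : Real.sin α = |Real.sin θ| := by
    rw [hα, Real.sin_pi_sub, Real.sin_arccos,
      show 1 - c ^ 2 = Real.sin θ ^ 2 by rw [hc]; nlinarith [Real.sin_sq_add_cos_sq θ],
      Real.sqrt_sq_eq_abs]
  have hcont : Continuous fun u : ℝ => |Real.cos u + c| :=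
    (Real.continuous_cos.add continuous_const).abs
  have hint : ∀ a b : ℝ, IntervalIntegrable (fun u => |Real.cos u + c|) volume a b :=
    fun a b => hcont.intervalIntegrable a b
  have keval : ∀ a b : ℝ, (∫ u in a..b, (Real.cos u + c)) =
      Real.sin b - Real.sin a + c * (b - a) := by
    intro a b
    rw [intervalIntegral.integral_add (Real.continuous_cos.intervalIntegrable a b)
      (intervalIntegrable_const), integral_cos, intervalIntegral.integral_const, smul_eq_mul]
    ring
  have h1 : (∫ u in (-π)..(-α), |Real.cos u + c|) = Real.sin α + c * α - c * π := by
    rw [intervalIntegral.integral_congr (g := fun u => -(Real.cos u + c)) ?_,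
      intervalIntegral.integral_neg, keval]
    · rw [Real.sin_neg, Real.sin_neg, Real.sin_pi]; ring
    · intro u hu
      rw [Set.uIcc_of_le (by linarith)] at hu
      have h1 : Real.cos u ≤ -c := by
        rw [← Real.cos_neg u, ← hcosα]
        exact Real.cos_le_cos_of_nonneg_of_le_pi hα0 (by linarith [hu.1]) (by linarith [hu.2])
      simp only [abs_of_nonpos (by linarith : Real.cos u + c ≤ 0)]
  have h2 : (∫ u in (-α)..α, |Real.cos u + c|) = 2 * Real.sin α + 2 * (c * α) := by
    rw [intervalIntegral.integral_congr (g := fun u => Real.cos u + c) ?_, keval]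
    · rw [Real.sin_neg]; ring
    · intro u hu
      rw [Set.uIcc_of_le (by linarith)] at hu
      have h1 : -c ≤ Real.cos u := by
        rw [← Real.cos_abs u, ← hcosα]
        exact Real.cos_le_cos_of_nonneg_of_le_pi (abs_nonneg u) hαπ
          (abs_le.mpr ⟨hu.1, hu.2⟩)
      simp only [abs_of_nonneg (by linarith : 0 ≤ Real.cos u + c)]
  have h3 : (∫ u in α..π, |Real.cos u + c|) = Real.sin α + c * α - c * π := by
    rw [intervalIntegral.integral_congr (g := fun u => -(Real.cos u + c)) ?_,
      intervalIntegral.integral_neg, keval]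
    · rw [Real.sin_pi]; ring
    · intro u hu
      rw [Set.uIcc_of_le (by linarith)] at hu
      have h1 : Real.cos u ≤ -c := by
        rw [← hcosα]
        exact Real.cos_le_cos_of_nonneg_of_le_pi hα0 hu.2 hu.1
      simp only [abs_of_nonpos (by linarith : Real.cos u + c ≤ 0)]
  have e1 := intervalIntegral.integral_add_adjacent_intervals (a := -π) (b := -α) (c := α)
    (hint _ _) (hint _ _)
  have e2 := intervalIntegral.integral_add_adjacent_intervals (a := -π) (b := α) (c := π)
    (hint _ _) (hint _ _)
  have hαval : α = π / 2 + Real.arcsin c := by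
    rw [hα, Real.arccos_eq_pi_div_two_sub_arcsin]; ring
  rw [← e2, ← e1, h1, h2, h3, hsinα, hαval]
  ring

open Real Set Filter in
private lemma keyI (θ : ℝ) : (∫ φ in (-π)..π, |Real.cos φ * Real.cos (φ - θ)|) =
    2 * (|Real.sin θ| + Real.arcsin (Real.cos θ) * Real.cos θ) := by
  set c := Real.cos θ with hc
  have hcont : Continuous fun u : ℝ => |Real.cos u + c| :=
    (Real.continuous_cos.add continuous_const).abs
  have hint : ∀ a b : ℝ, IntervalIntegrable (fun u => |Real.cos u + c|) volume a b :=
    fun a b => hcont.intervalIntegrable a b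
  have hid : ∀ φ : ℝ, |Real.cos φ * Real.cos (φ - θ)| = |Real.cos (2 * φ - θ) + c| / 2 := by
    intro φ
    have h1 : Real.cos (2 * φ - θ) =
        Real.cos φ * Real.cos (φ - θ) - Real.sin φ * Real.sin (φ - θ) := by
      rw [show 2 * φ - θ = φ + (φ - θ) by ring, Real.cos_add]
    have h2 := Real.cos_sub φ (φ - θ)
    rw [show φ - (φ - θ) = θ by ring] at h2
    rw [show Real.cos (2 * φ - θ) + c = 2 * (Real.cos φ * Real.cos (φ - θ)) by
      rw [hc]; linarith, abs_mul (2:ℝ) (Real.cos φ * Real.cos (φ - θ)), abs_two]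
    ring
  rw [intervalIntegral.integral_congr (g := fun φ => |Real.cos (2 * φ - θ) + c| / 2)
    (fun φ _ => hid φ)]
  rw [intervalIntegral.integral_div]
  have hsub := intervalIntegral.integral_comp_mul_left (a := -π) (b := π)
    (fun u => |Real.cos (u - θ) + c|) (c := 2) two_ne_zero
  rw [show (fun φ : ℝ => |Real.cos (2 * φ - θ) + c|)
      = fun φ : ℝ => |Real.cos (2 * φ - θ) + c| from rfl]
  rw [show (∫ φ in (-π)..π, |Real.cos (2 * φ - θ) + c|)
      = (2:ℝ)⁻¹ • ∫ x in (2:ℝ) * (-π)..(2:ℝ) * π, |Real.cos (x - θ) + c| from hsub]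
  have hsub2 := intervalIntegral.integral_comp_sub_right (a := (2:ℝ) * (-π)) (b := (2:ℝ) * π)
    (fun u => |Real.cos u + c|) θ
  rw [show (∫ x in (2:ℝ) * (-π)..(2:ℝ) * π, |Real.cos (x - θ) + c|)
      = ∫ x in ((2:ℝ) * (-π) - θ)..((2:ℝ) * π - θ), |Real.cos x + c| from hsub2]
  have hper : Function.Periodic (fun u : ℝ => |Real.cos u + c|) (2 * π) := by
    intro x; simp only [Real.cos_add_two_pi]
  have hsplit := intervalIntegral.integral_add_adjacent_intervals
    (a := (2:ℝ) * (-π) - θ) (b := -θ) (c := (2:ℝ) * π - θ) (hint _ _) (hint _ _)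
  have p1 := hper.intervalIntegral_add_eq ((2:ℝ) * (-π) - θ) (-π)
  have p2 := hper.intervalIntegral_add_eq (-θ) (-π)
  rw [show (2:ℝ) * (-π) - θ + 2 * π = -θ by ring, show -π + 2 * π = π by ring] at p1
  rw [show -θ + 2 * π = (2:ℝ) * π - θ by ring, show -π + 2 * π = π by ring] at p2
  have hK := keyK θ
  rw [← hsplit, p1, p2, hK, smul_eq_mul, ← hc]
  field_simp
  ring

open Real Set Filter in
private lemma radial_integral : (∫ r in Set.Ioi (0:ℝ), r ^ 3 * Real.exp (-(r ^ 2 / 2))) = 2 := by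
  have hderiv : ∀ x ∈ Set.Ioi (0:ℝ),
      HasDerivAt (fun r : ℝ => -(r ^ 2 + 2) * Real.exp (-(r ^ 2 / 2)))
        (x ^ 3 * Real.exp (-(x ^ 2 / 2))) x := by
    intro x _
    have h1 : HasDerivAt (fun r : ℝ => -(r ^ 2 + 2)) (-(2 * x)) x := by
      exact ((hasDerivAt_pow 2 x).add_const 2).neg.congr_deriv (by ring)
    have h3 : HasDerivAt (fun r : ℝ => -(r ^ 2 / 2)) (-x) x := by
      have := ((hasDerivAt_pow 2 x).div_const 2).neg
      exact this.congr_deriv (by ring)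
    have h2 : HasDerivAt (fun r : ℝ => Real.exp (-(r ^ 2 / 2)))
        (Real.exp (-(x ^ 2 / 2)) * -x) x := h3.exp
    have := h1.mul h2
    exact this.congr_deriv (by ring)
  have hcont : ContinuousWithinAt (fun r : ℝ => -(r ^ 2 + 2) * Real.exp (-(r ^ 2 / 2)))
      (Set.Ici 0) 0 := by
    apply Continuous.continuousWithinAt; fun_prop
  have hpos : ∀ x ∈ Set.Ioi (0:ℝ), 0 ≤ x ^ 3 * Real.exp (-(x ^ 2 / 2)) := by
    intro x hx
    have : (0:ℝ) < x := hx
    positivity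
  have htend : Filter.Tendsto (fun r : ℝ => -(r ^ 2 + 2) * Real.exp (-(r ^ 2 / 2)))
      Filter.atTop (nhds 0) := by
    have hq : Filter.Tendsto (fun r : ℝ => r ^ 2 / 2) Filter.atTop Filter.atTop :=
      (tendsto_pow_atTop two_ne_zero).atTop_div_const (by norm_num)
    have h1 : Filter.Tendsto (fun r : ℝ => (r ^ 2 / 2) ^ 1 * Real.exp (-(r ^ 2 / 2)))
        Filter.atTop (nhds 0) := (Real.tendsto_pow_mul_exp_neg_atTop_nhds_zero 1).comp hq
    have h0 : Filter.Tendsto (fun r : ℝ => Real.exp (-(r ^ 2 / 2))) Filter.atTop (nhds 0) := by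
      have := Real.tendsto_exp_neg_atTop_nhds_zero.comp hq
      exact this
    have h := ((h1.const_mul 2).add (h0.const_mul 2)).neg
    have h' : Filter.Tendsto
        (fun r : ℝ => -(2 * ((r ^ 2 / 2) ^ 1 * Real.exp (-(r ^ 2 / 2)))
          + 2 * Real.exp (-(r ^ 2 / 2)))) Filter.atTop (nhds 0) := by
      simpa using h
    exact h'.congr (fun r => by ring)
  have := MeasureTheory.integral_Ioi_of_hasDerivAt_of_nonneg hcont hderiv hpos htend
  rw [this]
  norm_num

open Real Set Filter in
private lemma gauss_prod_eq : (gaussianReal 0 1).prod (gaussianReal 0 1)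
    = (volume : Measure (ℝ × ℝ)).withDensity
      (fun p => gaussianPDF 0 1 p.1 * gaussianPDF 0 1 p.2) := by
  refine Measure.prod_eq fun s t hs ht => ?_
  rw [withDensity_apply _ (hs.prod ht), Measure.volume_eq_prod, ← Measure.prod_restrict,
    lintegral_prod_mul (measurable_gaussianPDF 0 1).aemeasurable
      (measurable_gaussianPDF 0 1).aemeasurable,
    gaussianReal_apply 0 one_ne_zero s, gaussianReal_apply 0 one_ne_zero t]

open Real Set Filter in
theorem expectation_abs_gaussian_product (θ : ℝ) :
    ∫ p : ℝ × ℝ, |p.1 * (p.1 * Real.cos θ + p.2 * Real.sin θ)|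
        ∂((gaussianReal 0 1).prod (gaussianReal 0 1)) =
      (2 / Real.pi) * (|Real.sin θ| + Real.arcsin (Real.cos θ) * Real.cos θ) := by
  rw [gauss_prod_eq]
  have hmeas : Measurable fun p : ℝ × ℝ =>
      (gaussianPDFReal 0 1 p.1).toNNReal * (gaussianPDFReal 0 1 p.2).toNNReal :=
    ((measurable_real_toNNReal.comp ((measurable_gaussianPDFReal 0 1).comp measurable_fst)).mul
      (measurable_real_toNNReal.comp ((measurable_gaussianPDFReal 0 1).comp measurable_snd)))
  have hne : (fun p : ℝ × ℝ =>
      (((gaussianPDFReal 0 1 p.1).toNNReal * (gaussianPDFReal 0 1 p.2).toNNReal : NNReal) : ENNReal))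
      = fun p => gaussianPDF 0 1 p.1 * gaussianPDF 0 1 p.2 := by
    funext p; rw [ENNReal.coe_mul]; rfl
  rw [← hne, integral_withDensity_eq_integral_smul hmeas]
  have hsm : (fun p : ℝ × ℝ =>
        ((gaussianPDFReal 0 1 p.1).toNNReal * (gaussianPDFReal 0 1 p.2).toNNReal)
          • |p.1 * (p.1 * Real.cos θ + p.2 * Real.sin θ)|)
      = fun p : ℝ × ℝ => gaussianPDFReal 0 1 p.1 * gaussianPDFReal 0 1 p.2
          * |p.1 * (p.1 * Real.cos θ + p.2 * Real.sin θ)| := by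
    funext p
    rw [NNReal.smul_def, NNReal.coe_mul, Real.coe_toNNReal _ (gaussianPDFReal_nonneg _ _ _),
      Real.coe_toNNReal _ (gaussianPDFReal_nonneg _ _ _), smul_eq_mul]
  rw [hsm, ← integral_comp_polarCoord_symm]
  have htarget : polarCoord.target = Set.Ioi (0:ℝ) ×ˢ Set.Ioo (-π) π := rfl
  have hEq : Set.EqOn
      (fun p : ℝ × ℝ => p.1 • (gaussianPDFReal 0 1 (polarCoord.symm p).1
        * gaussianPDFReal 0 1 (polarCoord.symm p).2
        * |(polarCoord.symm p).1 * ((polarCoord.symm p).1 * Real.cos θ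
            + (polarCoord.symm p).2 * Real.sin θ)|))
      (fun p : ℝ × ℝ => (p.1 ^ 3 * Real.exp (-(p.1 ^ 2 / 2)))
        * ((2 * π)⁻¹ * |Real.cos p.2 * Real.cos (p.2 - θ)|))
      polarCoord.target := by
    intro p hp
    simp only [polarCoord_symm_apply, gaussianPDFReal_def, NNReal.coe_one, mul_one, sub_zero,
      smul_eq_mul]
    have hexp : Real.exp (-(p.1 * Real.cos p.2) ^ 2 / 2) * Real.exp (-(p.1 * Real.sin p.2) ^ 2 / 2)
        = Real.exp (-(p.1 ^ 2 / 2)) := by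
      rw [← Real.exp_add]
      congr 1
      have h := Real.sin_sq_add_cos_sq p.2
      linear_combination (-(p.1 ^ 2) / 2) * h
    have habs : |p.1 * Real.cos p.2 * (p.1 * Real.cos p.2 * Real.cos θ
          + p.1 * Real.sin p.2 * Real.sin θ)|
        = p.1 ^ 2 * |Real.cos p.2 * Real.cos (p.2 - θ)| := by
      rw [show p.1 * Real.cos p.2 * (p.1 * Real.cos p.2 * Real.cos θ
            + p.1 * Real.sin p.2 * Real.sin θ)
          = p.1 ^ 2 * (Real.cos p.2 * (Real.cos p.2 * Real.cos θ + Real.sin p.2 * Real.sin θ))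
          by ring, ← Real.cos_sub, abs_mul, abs_of_nonneg (sq_nonneg p.1)]
    have hsqinv : (Real.sqrt (2 * π))⁻¹ * (Real.sqrt (2 * π))⁻¹ = (2 * π)⁻¹ := by
      rw [← mul_inv, Real.mul_self_sqrt (by positivity)]
    rw [habs, ← hexp, ← hsqinv]
    ring
  rw [setIntegral_congr_fun (polarCoord.open_target.measurableSet) hEq, htarget, Measure.volume_eq_prod]
  have hm := MeasureTheory.setIntegral_prod_mul (μ := (volume : Measure ℝ))
    (ν := (volume : Measure ℝ)) (fun x : ℝ => x ^ 3 * Real.exp (-(x ^ 2 / 2)))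
    (fun y : ℝ => (2 * π)⁻¹ * |Real.cos y * Real.cos (y - θ)|) (Set.Ioi 0) (Set.Ioo (-π) π)
  rw [hm, radial_integral]
  have hang : (∫ y in Set.Ioo (-π) π, (2 * π)⁻¹ * |Real.cos y * Real.cos (y - θ)|)
      = (2 * π)⁻¹ * (2 * (|Real.sin θ| + Real.arcsin (Real.cos θ) * Real.cos θ)) := by
    rw [MeasureTheory.integral_const_mul]
    rw [← MeasureTheory.integral_Ioc_eq_integral_Ioo,
      ← intervalIntegral.integral_of_le (by linarith [Real.pi_pos] : -π ≤ π), keyI θ]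
  rw [hang]
  have hπ : (π : ℝ) ≠ 0 := Real.pi_ne_zero
  field_simp
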